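/- Let γ ≥ 2 + π/2 and define x̄ : ℝ → ℝ by x̄(t) = 1/2 + π/(4γ) + √(1/2 − 1/γ − (π/(2γ²))(1 + π/4)) · sin(πt/2). Then for every t ∈ ℝ, x̄(t) = (γ/2) ∫_{−3}^{−1} x̄(t+θ)(1 − x̄(t+θ)) dθ, and x̄ is 4-periodic, i.e., x̄(t+4) = x̄(t) for all t ∈ ℝ. -/

import Mathlib

open Real intervalIntegral

/-- For `γ ≥ 2 + π/2`, the function
`x̄(t) = 1/2 + π/(4γ) + √(1/2 - 1/γ - (π/(2γ²))(1 + π/4)) · sin(πt/2)`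
is a 4-periodic solution of the renewal equation with quadratic nonlinearity
`x(t) = (γ/2) ∫_{-3}^{-1} x(t+θ)(1 - x(t+θ)) dθ`. -/
theorem quadRE_explicit_periodic_solution (γ : ℝ) (hγ : 2 + Real.pi / 2 ≤ γ)
    (xbar : ℝ → ℝ)
    (hxbar : ∀ t : ℝ, xbar t =
      1 / 2 + Real.pi / (4 * γ) +
        Real.sqrt (1 / 2 - 1 / γ - Real.pi / (2 * γ ^ 2) * (1 + Real.pi / 4)) *
          Real.sin (Real.pi / 2 * t)) :
    (∀ t : ℝ, xbar t =
      γ / 2 * ∫ θ in (-3 : ℝ)..(-1 : ℝ), xbar (t + θ) * (1 - xbar (t + θ))) ∧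
    (∀ t : ℝ, xbar (t + 4) = xbar t) := by
  have hπ := Real.pi_pos
  have hπ0 : Real.pi ≠ 0 := ne_of_gt hπ
  have hγ0 : 0 < γ := by nlinarith
  have hγne : γ ≠ 0 := ne_of_gt hγ0
  set R : ℝ := 1 / 2 - 1 / γ - Real.pi / (2 * γ ^ 2) * (1 + Real.pi / 4) with hRdef
  have hR : 0 ≤ R := by
    have h2 : 0 ≤ γ ^ 2 - 2 * γ - Real.pi - Real.pi ^ 2 / 4 := by nlinarith [sq_nonneg (γ - 2 - Real.pi / 2)]
    have : R = (γ ^ 2 - 2 * γ - Real.pi - Real.pi ^ 2 / 4) / (2 * γ ^ 2) := by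
      rw [hRdef]; field_simp; ring
    rw [this]
    positivity
  set a : ℝ := 1 / 2 + Real.pi / (4 * γ) with hadef
  set b : ℝ := Real.sqrt R with hbdef
  have hb2 : b ^ 2 = R := Real.sq_sqrt hR
  constructor
  · intro t
    set F : ℝ → ℝ := fun θ =>
      (a * (1 - a) - b ^ 2 / 2) * θ
        - b * (1 - 2 * a) * (2 / Real.pi) * Real.cos (Real.pi / 2 * (t + θ))
        + b ^ 2 / (2 * Real.pi) * Real.sin (Real.pi * (t + θ)) with hFdef
    have hF : ∀ θ : ℝ, HasDerivAt F (xbar (t + θ) * (1 - xbar (t + θ))) θ := by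
      intro θ
      have h1 : HasDerivAt (fun θ : ℝ => Real.pi / 2 * (t + θ)) (Real.pi / 2) θ := by
        simpa using ((hasDerivAt_id θ).const_add t).const_mul (Real.pi / 2)
      have h2 : HasDerivAt (fun θ : ℝ => Real.pi * (t + θ)) Real.pi θ := by
        simpa using ((hasDerivAt_id θ).const_add t).const_mul Real.pi
      have hc := h1.cos
      have hs := h2.sin
      have hder := (((hasDerivAt_id θ).const_mul (a * (1 - a) - b ^ 2 / 2)).sub
        (hc.const_mul (b * (1 - 2 * a) * (2 / Real.pi)))).add
        (hs.const_mul (b ^ 2 / (2 * Real.pi)))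
      refine hder.congr_deriv ?_
      have hcc : Real.cos (Real.pi * (t + θ)) = 2 * Real.cos (Real.pi / 2 * (t + θ)) ^ 2 - 1 := by
        rw [show Real.pi * (t + θ) = 2 * (Real.pi / 2 * (t + θ)) by ring]
        exact Real.cos_two_mul _
      have hx : Real.sin (Real.pi / 2 * (t + θ)) * Real.sin (Real.pi / 2 * (t + θ))
          = 1 / 2 - Real.cos (Real.pi * (t + θ)) / 2 := by
        linear_combination Real.sin_sq_add_cos_sq (Real.pi / 2 * (t + θ)) + (1 / 2) * hcc
      have key : xbar (t + θ) * (1 - xbar (t + θ))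
          = a * (1 - a) - b ^ 2 / 2 + b * (1 - 2 * a) * Real.sin (Real.pi / 2 * (t + θ))
            + b ^ 2 / 2 * Real.cos (Real.pi * (t + θ)) := by
        rw [hxbar (t + θ)]
        linear_combination (-(b ^ 2)) * hx
      rw [key]
      field_simp
      ring
    have hcont : Continuous (fun θ : ℝ => xbar (t + θ) * (1 - xbar (t + θ))) := by
      have heq : (fun θ : ℝ => xbar (t + θ) * (1 - xbar (t + θ)))
          = fun θ : ℝ => (a + b * Real.sin (Real.pi / 2 * (t + θ)))
              * (1 - (a + b * Real.sin (Real.pi / 2 * (t + θ)))) := by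
        funext θ; rw [hxbar (t + θ)]
      rw [heq]; fun_prop
    have hint := intervalIntegral.integral_eq_sub_of_hasDerivAt
      (fun θ _ => hF θ) (hcont.intervalIntegrable (-3) (-1))
    have e1 : Real.pi / 2 * (t + -1) = Real.pi / 2 * t - Real.pi / 2 := by ring
    have e2 : Real.pi / 2 * (t + -3) = (Real.pi / 2 * t - Real.pi / 2) - Real.pi := by ring
    have e3 : Real.pi * (t + -1) = Real.pi * t - Real.pi := by ring
    have e4 : Real.pi * (t + -3) = (Real.pi * t - Real.pi) - 2 * Real.pi := by ring
    have hval : F (-1) - F (-3)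
        = 2 * (a * (1 - a)) - b ^ 2
          - 4 / Real.pi * (b * (1 - 2 * a)) * Real.sin (Real.pi / 2 * t) := by
      rw [hFdef]
      simp only []
      rw [e1, e2, e3, e4, Real.cos_sub_pi, Real.sin_sub_two_pi, Real.cos_sub,
        Real.cos_pi_div_two, Real.sin_pi_div_two]
      field_simp
      ring
    have h1m2a : 1 - 2 * a = -(Real.pi / (2 * γ)) := by
      rw [hadef]; field_simp; ring
    have hconst : γ / 2 * (2 * (a * (1 - a)) - b ^ 2) = a := by
      rw [hb2, hRdef, hadef]; field_simp; ring
    have hsin : γ / 2 * (-(4 / Real.pi) * (b * (1 - 2 * a))) = b := by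
      rw [h1m2a]; field_simp; ring
    rw [hint, hval, hxbar t, hb2, hRdef, hadef]
    field_simp
    ring
  · intro t
    rw [hxbar, hxbar]
    rw [show Real.pi / 2 * (t + 4) = Real.pi / 2 * t + 2 * Real.pi by ring,
      Real.sin_add_two_pi]
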